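/- Let K be a field, X = (X_{ij}) the n×n matrix of indeterminates, and R = K[X_{ij} : 1 ≤ i,j ≤ n]. Given pairs (t_1,a_1),…,(t_w,a_w) of positive integers with t_i + a_i ≤ n+1, set S = {(t_1,a_1),…,(t_w,a_w)}, I_S = ∏_{i=1}^w I_{t_i}(a_i) and J_S = ∏_{i=1}^w J_{t_i}(a_i). Then for every pair (u,b) of positive integers with u + b ≤ n+1, e_{ub}(S) = max{j ≥ 0 : I_S ⊆ I_u(b)^j} = max{j ≥ 0 : J_S ⊆ J_u(b)^j}, where e_{ub}(S) = |{i : b ≤ a_i and u ≤ t_i}|. -/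

import Mathlib

open MvPolynomial

/-- The northeast ideal `I_t(a)`: generated by the `t`-minors (maximal minors) of the
submatrix `X_t(a) = (X_ij : 1 ≤ i ≤ t, a ≤ j ≤ n)` (indices encoded `0`-based). -/
noncomputable def neIdeal (K : Type*) [Field K] (n t a : ℕ) : Ideal (MvPolynomial (Fin n × Fin n) K) :=
  Ideal.span {f | ∃ r c : Fin t → Fin n,
    (∀ i : Fin t, (r i : ℕ) = (i : ℕ)) ∧ StrictMono c ∧ (∀ j : Fin t, a ≤ (c j : ℕ) + 1) ∧
    f = Matrix.det (Matrix.of fun i j : Fin t => X (r i, c j))}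

/-- The monomial ideal `J_t(a)`: generated by the products `X_{1 b_1} ⋯ X_{t b_t}` with
`a ≤ b_1 < ⋯ < b_t ≤ n` (indices encoded `0`-based). -/
noncomputable def neMonIdeal (K : Type*) [Field K] (n t a : ℕ) : Ideal (MvPolynomial (Fin n × Fin n) K) :=
  Ideal.span {f | ∃ r c : Fin t → Fin n,
    (∀ i : Fin t, (r i : ℕ) = (i : ℕ)) ∧ StrictMono c ∧ (∀ j : Fin t, a ≤ (c j : ℕ) + 1) ∧
    f = ∏ i : Fin t, X (r i, c i)}

section Generic



lemma prod_le_pow {A : Type*} [CommRing A] {ι : Type*} (s : Finset ι)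
    (F : ι → Ideal A) (B : Ideal A) (p : ι → Prop) [DecidablePred p]
    (h : ∀ i ∈ s, p i → F i ≤ B) : ∏ i ∈ s, F i ≤ B ^ (s.filter p).card := by
  classical
  induction s using Finset.induction_on with
  | empty => simp
  | @insert x s hx ih =>
    rw [Finset.prod_insert hx, Finset.filter_insert]
    by_cases hp : p x
    · rw [if_pos hp, Finset.card_insert_of_notMem (fun hmem => hx (Finset.mem_of_mem_filter _ hmem)),
        pow_succ']
      exact Ideal.mul_mono (h x (Finset.mem_insert_self _ _) hp)
        (ih fun i hi hpi => h i (Finset.mem_insert_of_mem hi) hpi)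
    · rw [if_neg hp]
      exact le_trans Ideal.mul_le_right (ih fun i hi hpi => h i (Finset.mem_insert_of_mem hi) hpi)

lemma ntd_prod {A : Type*} [CommRing A] [IsDomain A] {ι : Type*} (s : Finset ι)
    (f : ι → Polynomial A) (hf : ∀ i ∈ s, f i ≠ 0) :
    (∏ i ∈ s, f i) ≠ 0 ∧
      (∏ i ∈ s, f i).natTrailingDegree = ∑ i ∈ s, (f i).natTrailingDegree := by
  classical
  induction s using Finset.induction_on with
  | empty => simp
  | @insert x s hx ih =>
    have h1 : f x ≠ 0 := hf x (Finset.mem_insert_self _ _)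
    obtain ⟨hz, hd⟩ := ih fun i hi => hf i (Finset.mem_insert_of_mem hi)
    rw [Finset.prod_insert hx, Finset.sum_insert hx]
    exact ⟨mul_ne_zero h1 hz, by rw [Polynomial.natTrailingDegree_mul h1 hz, hd]⟩


end Generic

namespace NEAux

variable {K : Type*} [Field K] {n : ℕ}

/-- weight-raising substitution -/
noncomputable def phi (K : Type*) [Field K] (n : ℕ) (W : Fin n × Fin n → ℕ) :
    MvPolynomial (Fin n × Fin n) K →ₐ[K] Polynomial (MvPolynomial (Fin n × Fin n) K) :=
  aeval fun p => Polynomial.C (X p) * Polynomial.X ^ W p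

lemma phi_X (W : Fin n × Fin n → ℕ) (p : Fin n × Fin n) :
    phi K n W (X p) = Polynomial.C (X p) * Polynomial.X ^ W p := by
  simp [phi]

/-- the I-side weight -/
def wtI (u b : ℕ) (p : Fin n × Fin n) : ℕ :=
  if (p.1 : ℕ) = u - 1 ∧ b - 1 ≤ (p.2 : ℕ) then 1 else 0

/-- the J-side weight -/
def wtJ (u b : ℕ) (p : Fin n × Fin n) : ℕ :=
  if (p.1 : ℕ) = u - 1 ∧ b - 1 + (u - 1) ≤ (p.2 : ℕ) then 1 else 0

/-- a determinant of a matrix of (distinct) variables is nonzero, more generally the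
zero-coefficient extraction of its phi image is nonzero, provided some permutation
pattern has weight zero. Stated directly for what we need. -/
lemma det_pattern_ne_zero (t' : ℕ) (r c : Fin t' → Fin n)
    (hr : ∀ i, (r i : ℕ) = (i : ℕ)) (hc : Function.Injective c)
    (σ : Equiv.Perm (Fin t'))
    (M : Matrix (Fin t') (Fin t') (MvPolynomial (Fin n × Fin n) K))
    (hM : ∀ i j, M i j = X (r i, c j) ∨ M i j = 0)
    (hMσ : ∀ i, M i (σ i) = X (r i, c (σ i))) :
    M.det ≠ 0 := by
  classical
  have hrinj : Function.Injective r := by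
    intro i j h
    have : (i : ℕ) = (j : ℕ) := by rw [← hr i, ← hr j, h]
    exact Fin.ext this
  -- evaluate at the permutation point
  set v : Fin n × Fin n → K := fun p => if ∃ i, p = (r i, c (σ i)) then 1 else 0 with hv
  intro h0
  have := congrArg (eval v) h0
  rw [RingHom.map_det, map_zero] at this
  have hEq : (eval v).mapMatrix M = (Equiv.Perm.permMatrix K σ) := by
    ext i j
    simp only [RingHom.mapMatrix_apply, Matrix.map_apply, Equiv.Perm.permMatrix,
      PEquiv.toMatrix_apply, Equiv.toPEquiv_apply, Option.mem_def, Option.some.injEq]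
    by_cases hij : σ i = j
    · subst hij
      rw [hMσ i]
      simp only [eval_X, hv]
      rw [if_pos ⟨i, rfl⟩]
      simp
    · rcases hM i j with h | h
      · rw [h]
        simp only [eval_X, hv]
        rw [if_neg, if_neg (by simpa [eq_comm] using hij)]
        rintro ⟨i', hi'⟩
        have h1 : r i = r i' := congrArg Prod.fst hi'
        have h2 : c j = c (σ i') := congrArg Prod.snd hi'
        exact hij (by rw [hrinj h1]; exact (hc h2).symm)
      · rw [h]
        simp only [map_zero]
        rw [if_neg (by simpa [eq_comm] using hij)]
  rw [hEq, Matrix.det_permutation] at this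
  rcases Int.units_eq_one_or (Equiv.Perm.sign σ) with h | h <;> rw [h] at this <;>
    simp at this


lemma phi_prod (W : Fin n × Fin n → ℕ) {t' : ℕ} (p : Fin t' → Fin n × Fin n) :
    phi K n W (∏ i, X (p i)) =
      Polynomial.C (∏ i, X (p i)) * Polynomial.X ^ (∑ i, W (p i)) := by
  rw [map_prod]
  simp only [phi_X]
  rw [Finset.prod_mul_distrib, Finset.prod_pow_eq_pow_sum, ← map_prod]

lemma phi_det_row (W : Fin n × Fin n → ℕ) {t' : ℕ} (r c : Fin t' → Fin n) (i₀ : Fin t')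
    (h1 : ∀ j, W (r i₀, c j) = 1) (h0 : ∀ i j, i ≠ i₀ → W (r i, c j) = 0) :
    phi K n W (Matrix.det (Matrix.of fun i j : Fin t' => X (r i, c j))) =
      Polynomial.X * Polynomial.C (Matrix.det (Matrix.of fun i j : Fin t' => X (r i, c j))) := by
  classical
  set N : Matrix (Fin t') (Fin t') (Polynomial (MvPolynomial (Fin n × Fin n) K)) :=
    Matrix.of fun i j => Polynomial.C (X (r i, c j)) with hN
  have key : (phi K n W).toRingHom.mapMatrix (Matrix.of fun i j : Fin t' => X (r i, c j)) =
      N.updateRow i₀ ((Polynomial.X : Polynomial (MvPolynomial (Fin n × Fin n) K)) • N i₀) := by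
    ext i j
    simp only [RingHom.mapMatrix_apply, Matrix.map_apply, Matrix.of_apply, AlgHom.toRingHom_eq_coe,
      RingHom.coe_coe, phi_X, Matrix.updateRow_apply, hN]
    by_cases hi : i = i₀
    · subst hi
      rw [if_pos rfl, h1 j, pow_one, Pi.smul_apply, smul_eq_mul, Matrix.of_apply, mul_comm]
    · rw [if_neg hi, h0 i j hi, pow_zero, mul_one]
  have := RingHom.map_det (phi K n W).toRingHom (Matrix.of fun i j : Fin t' => X (r i, c j))
  rw [key] at this
  rw [show (phi K n W) (Matrix.det (Matrix.of fun i j : Fin t' => X (r i, c j))) =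
      (phi K n W).toRingHom (Matrix.det (Matrix.of fun i j : Fin t' => X (r i, c j))) from rfl,
    this, Matrix.det_updateRow_smul, Matrix.updateRow_eq_self]
  congr 1
  rw [RingHom.map_det]
  rfl

lemma sm_bound {t' : ℕ} (c : Fin t' → Fin n) (hc : StrictMono c) (lo : ℕ)
    (hlo : ∀ j, lo ≤ (c j : ℕ)) : ∀ (m : ℕ) (hm : m < t'), lo + m ≤ (c ⟨m, hm⟩ : ℕ) := by
  intro m
  induction m with
  | zero => intro hm; have := hlo ⟨0, hm⟩; omega
  | succ k ih =>
    intro hm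
    have hk : k < t' := Nat.lt_of_succ_lt hm
    have h1 : (c ⟨k, hk⟩ : ℕ) < (c ⟨k+1, hm⟩ : ℕ) := by
      exact Fin.lt_def.mp (hc (show (⟨k, hk⟩ : Fin t') < ⟨k+1, hm⟩ from
        Fin.mk_lt_mk.mpr (Nat.lt_succ_self k)))
    have h2 := ih hk
    omega

lemma det_gen_mem (u b : ℕ) :
    ∀ t', u ≤ t' → ∀ (r c : Fin t' → Fin n), (∀ i, (r i : ℕ) = (i : ℕ)) → StrictMono c →
      (∀ j, b ≤ (c j : ℕ) + 1) →
      Matrix.det (Matrix.of fun i j : Fin t' => X (r i, c j)) ∈ neIdeal K n u b := by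
  refine Nat.le_induction ?_ ?_
  · intro r c hr hc hcb
    exact Ideal.subset_span ⟨r, c, hr, hc, hcb, rfl⟩
  · intro m _ ih r c hr hc hcb
    rw [Matrix.det_succ_row _ (Fin.last m)]
    apply Ideal.sum_mem
    intro j _
    apply Ideal.mul_mem_left
    have hsub : ((Matrix.of fun i j : Fin (m+1) => X (r i, c j)).submatrix
        (Fin.last m).succAbove j.succAbove) =
        Matrix.of fun i' j' : Fin m => (X (r (Fin.castSucc i') , c (j.succAbove j')) : MvPolynomial (Fin n × Fin n) K) := by
      ext i' j'
      simp [Matrix.submatrix_apply, Fin.succAbove_last]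
    rw [hsub]
    exact ih (fun i' => r (Fin.castSucc i')) (fun j' => c (j.succAbove j'))
      (fun i' => by rw [hr]; simp)
      (hc.comp (Fin.strictMono_succAbove j))
      (fun j' => hcb _)

lemma neIdeal_le {u b t' a' : ℕ} (hut : u ≤ t') (hba : b ≤ a') :
    neIdeal K n t' a' ≤ neIdeal K n u b := by
  rw [neIdeal, Ideal.span_le]
  rintro f ⟨r, c, hr, hc, hca, rfl⟩
  exact det_gen_mem u b t' hut r c hr hc (fun j => by have := hca j; omega)

lemma neMonIdeal_le {u b t' a' : ℕ} (hut : u ≤ t') (hba : b ≤ a') :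
    neMonIdeal K n t' a' ≤ neMonIdeal K n u b := by
  rw [neMonIdeal, Ideal.span_le]
  rintro f ⟨r, c, hr, hc, hca, rfl⟩
  obtain ⟨d, rfl⟩ := Nat.exists_eq_add_of_le hut
  show (∏ i : Fin (u + d), X (r i, c i)) ∈ neMonIdeal K n u b
  rw [Fin.prod_univ_add]
  apply Ideal.mul_mem_right
  apply Ideal.subset_span
  refine ⟨fun i => r (Fin.castAdd d i), fun i => c (Fin.castAdd d i),
    fun i => by rw [hr]; simp, ?_, fun j => by show b ≤ (c (Fin.castAdd d j) : ℕ) + 1; have := hca (Fin.castAdd d j); omega, rfl⟩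
  intro x y hxy
  exact hc (show Fin.castAdd d x < Fin.castAdd d y by
    rw [Fin.lt_def] at hxy ⊢; simpa using hxy)

lemma psi_X (W : Fin n × Fin n → ℕ) (p : Fin n × Fin n) :
    (Polynomial.constantCoeff : Polynomial (MvPolynomial (Fin n × Fin n) K) →+* _)
        (phi K n W (X p)) = if W p = 0 then X p else 0 := by
  rw [phi_X, map_mul]
  by_cases h : W p = 0
  · simp [h]
  · simp [h, Polynomial.constantCoeff_apply, Polynomial.coeff_X_pow, Ne.symm h]

lemma constCoeff_phi_det (W : Fin n × Fin n → ℕ) {t' : ℕ} (r c : Fin t' → Fin n)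
    (hr : ∀ i, (r i : ℕ) = (i : ℕ)) (hcinj : Function.Injective c)
    (σ : Equiv.Perm (Fin t')) (hσ : ∀ i, W (r i, c (σ i)) = 0) :
    Polynomial.constantCoeff
      (phi K n W (Matrix.det (Matrix.of fun i j : Fin t' => X (r i, c j)))) ≠ 0 := by
  classical
  have heq : Polynomial.constantCoeff
      (phi K n W (Matrix.det (Matrix.of fun i j : Fin t' => X (r i, c j)))) =
      (((Polynomial.constantCoeff).comp (phi K n W).toRingHom).mapMatrix
        (Matrix.of fun i j : Fin t' => X (r i, c j))).det := by
    rw [← RingHom.map_det]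
    rfl
  rw [heq]
  apply det_pattern_ne_zero t' r c hr hcinj σ
  · intro i j
    show (Polynomial.constantCoeff) (phi K n W (X (r i, c j))) = _ ∨
      (Polynomial.constantCoeff) (phi K n W (X (r i, c j))) = 0
    rw [psi_X]
    by_cases h : W (r i, c j) = 0
    · left; rw [if_pos h]
    · right; rw [if_neg h]
  · intro i
    show (Polynomial.constantCoeff) (phi K n W (X (r i, c (σ i)))) = _
    rw [psi_X, if_pos (hσ i)]

lemma det_X_ne_zero {t' : ℕ} (r c : Fin t' → Fin n)
    (hr : ∀ i, (r i : ℕ) = (i : ℕ)) (hcinj : Function.Injective c) :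
    Matrix.det (Matrix.of fun i j : Fin t' => (X (r i, c j) : MvPolynomial (Fin n × Fin n) K)) ≠ 0 := by
  apply det_pattern_ne_zero t' r c hr hcinj (Equiv.refl _)
  · intro i j; left; rfl
  · intro i; rfl

lemma neIdeal_le_comap (u b : ℕ) (hu : 0 < u) :
    neIdeal K n u b ≤ Ideal.comap (phi K n (wtI u b)).toRingHom
      (Ideal.span {(Polynomial.X : Polynomial (MvPolynomial (Fin n × Fin n) K))}) := by
  rw [neIdeal, Ideal.span_le]
  rintro f ⟨r, c, hr, hc, hca, rfl⟩
  have hu1 : u - 1 < u := by omega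
  have key := phi_det_row (K := K) (wtI u b) r c ⟨u - 1, hu1⟩
    (fun j => by
      unfold wtI
      rw [if_pos ⟨by rw [hr], by show b - 1 ≤ (c j : ℕ); have := hca j; omega⟩])
    (fun i j hi => by
      unfold wtI
      rw [if_neg]
      rintro ⟨h1, -⟩
      exact hi (Fin.ext (by rw [← hr i, h1])))
  simp only [SetLike.mem_coe, Ideal.mem_comap]
  show phi K n (wtI u b) _ ∈ _
  rw [key]
  exact Ideal.mem_span_singleton.mpr (dvd_mul_right _ _)

lemma neMonIdeal_le_comap (u b : ℕ) (hu : 0 < u) :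
    neMonIdeal K n u b ≤ Ideal.comap (phi K n (wtJ u b)).toRingHom
      (Ideal.span {(Polynomial.X : Polynomial (MvPolynomial (Fin n × Fin n) K))}) := by
  rw [neMonIdeal, Ideal.span_le]
  rintro f ⟨r, c, hr, hc, hca, rfl⟩
  simp only [SetLike.mem_coe, Ideal.mem_comap]
  show phi K n (wtJ u b) _ ∈ _
  rw [phi_prod (wtJ u b) (fun i => (r i, c i))]
  have hu1 : u - 1 < u := by omega
  have hone : wtJ u b (r ⟨u - 1, hu1⟩, c ⟨u - 1, hu1⟩) = 1 := by
    unfold wtJ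
    rw [if_pos ⟨by rw [hr], sm_bound c hc (b - 1) (fun j => by have := hca j; omega) (u - 1) hu1⟩]
  have hsum : 1 ≤ ∑ i, wtJ u b (r i, c i) := by
    calc 1 = wtJ u b (r ⟨u - 1, hu1⟩, c ⟨u - 1, hu1⟩) := hone.symm
    _ ≤ ∑ i, wtJ u b (r i, c i) :=
      Finset.single_le_sum (f := fun i => wtJ u b (r i, c i)) (fun i _ => Nat.zero_le _)
        (Finset.mem_univ _)
  exact Ideal.mem_span_singleton.mpr ((dvd_pow_self _ (by omega)).mul_left _)

lemma upper_helper {w : ℕ} (W : Fin n × Fin n → ℕ) (Iub : Ideal (MvPolynomial (Fin n × Fin n) K))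
    (hle : Iub ≤ Ideal.comap (phi K n W).toRingHom
      (Ideal.span {(Polynomial.X : Polynomial (MvPolynomial (Fin n × Fin n) K))}))
    (F : Fin w → Ideal (MvPolynomial (Fin n × Fin n) K))
    (δ : Fin w → MvPolynomial (Fin n × Fin n) K) (hδ : ∀ i, δ i ∈ F i) (k : Fin w → ℕ)
    (hknz : ∀ i, phi K n W (δ i) ≠ 0)
    (hkd : ∀ i, (phi K n W (δ i)).natTrailingDegree ≤ k i)
    {j : ℕ} (hj : (∏ i, F i) ≤ Iub ^ j) : j ≤ ∑ i, k i := by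
  have hmem : (∏ i, δ i) ∈ Iub ^ j := hj (Ideal.prod_mem_prod fun i _ => hδ i)
  have hmap : phi K n W (∏ i, δ i) ∈
      Ideal.span {(Polynomial.X : Polynomial (MvPolynomial (Fin n × Fin n) K))} ^ j := by
    have h1 : Ideal.map (phi K n W).toRingHom (Iub ^ j) ≤ Ideal.span {Polynomial.X} ^ j := by
      rw [Ideal.map_pow]
      exact Ideal.pow_right_mono (Ideal.map_le_iff_le_comap.mpr hle) j
    exact h1 (Ideal.mem_map_of_mem _ hmem)
  rw [Ideal.span_singleton_pow, Ideal.mem_span_singleton] at hmap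
  have hdvd := Polynomial.X_pow_dvd_iff.mp hmap
  rw [map_prod] at hdvd
  obtain ⟨hz, hd⟩ := ntd_prod Finset.univ (fun i => phi K n W (δ i)) (fun i _ => hknz i)
  by_contra hcon
  push_neg at hcon
  have hlt : (∏ i, phi K n W (δ i)).natTrailingDegree < j := by
    rw [hd]
    exact lt_of_le_of_lt (Finset.sum_le_sum fun i _ => hkd i) hcon
  exact hz (Polynomial.trailingCoeff_eq_zero.mp (hdvd _ hlt))

end NEAux


open NEAux in
/-- For `S = {(t_1,a_1),…,(t_w,a_w)}` and every `(u,b)` with `u, b > 0`, `u + b ≤ n+1`,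
the exponent `e_ub(S) = |{i : b ≤ a_i ∧ u ≤ t_i}|` equals both
`max {j ≥ 0 : I_S ⊆ I_u(b)^j}` and `max {j ≥ 0 : J_S ⊆ J_u(b)^j}`. -/
theorem neIdeal_exponent_eq_max (K : Type*) [Field K] (n w : ℕ) (t a : Fin w → ℕ)
    (ht : ∀ i, 0 < t i) (ha : ∀ i, 0 < a i) (hta : ∀ i, t i + a i ≤ n + 1)
    (u b : ℕ) (hu : 0 < u) (hb : 0 < b) (hub : u + b ≤ n + 1) :
    ((Finset.univ.filter (fun i : Fin w => b ≤ a i ∧ u ≤ t i)).card =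
        sSup {j : ℕ | (∏ i : Fin w, neIdeal K n (t i) (a i)) ≤ (neIdeal K n u b) ^ j}) ∧
    ((Finset.univ.filter (fun i : Fin w => b ≤ a i ∧ u ≤ t i)).card =
        sSup {j : ℕ | (∏ i : Fin w, neMonIdeal K n (t i) (a i)) ≤ (neMonIdeal K n u b) ^ j}) := by
  classical
  have htn : ∀ i, t i ≤ n := fun i => by have := hta i; have := ha i; omega
  have hcbnd : ∀ (i : Fin w) (k : Fin (t i)), a i - 1 + (k : ℕ) < n := fun i k => by
    have := hta i; have := ha i; have := k.isLt; omega
  set rT : ∀ i : Fin w, Fin (t i) → Fin n :=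
    fun i k => ⟨(k : ℕ), lt_of_lt_of_le k.isLt (htn i)⟩ with hrT
  set cT : ∀ i : Fin w, Fin (t i) → Fin n := fun i k => ⟨a i - 1 + (k : ℕ), hcbnd i k⟩ with hcT
  have hrval : ∀ (i : Fin w) (k : Fin (t i)), ((rT i k : ℕ)) = (k : ℕ) := fun i k => rfl
  have hcval : ∀ (i : Fin w) (k : Fin (t i)), ((cT i k : ℕ)) = a i - 1 + (k : ℕ) :=
    fun i k => rfl
  have hcmono : ∀ i : Fin w, StrictMono (cT i) := by
    intro i x y hxy
    rw [Fin.lt_def] at hxy ⊢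
    simp only [hcT]
    omega
  have hccond : ∀ (i : Fin w) (k : Fin (t i)), a i ≤ ((cT i k : ℕ)) + 1 := by
    intro i k
    rw [hcval]
    have := ha i
    omega
  have hcinj : ∀ i : Fin w, Function.Injective (cT i) := fun i => (hcmono i).injective
  set kk : Fin w → ℕ := fun i => if b ≤ a i ∧ u ≤ t i then 1 else 0 with hkk
  have hsumkk : ∑ i, kk i = (Finset.univ.filter (fun i : Fin w => b ≤ a i ∧ u ≤ t i)).card := by
    simp [hkk, Finset.sum_boole]
  constructor
  · -- determinantal side
    set δ : ∀ i : Fin w, MvPolynomial (Fin n × Fin n) K :=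
      fun i => Matrix.det (Matrix.of fun k l : Fin (t i) => X (rT i k, cT i l)) with hδ
    have hδmem : ∀ i, δ i ∈ neIdeal K n (t i) (a i) := fun i =>
      Ideal.subset_span ⟨rT i, cT i, hrval i, hcmono i, hccond i, rfl⟩
    have hIfacts : ∀ i, phi K n (wtI u b) (δ i) ≠ 0 ∧
        (phi K n (wtI u b) (δ i)).natTrailingDegree ≤ kk i := by
      intro i
      by_cases hcase : b ≤ a i ∧ u ≤ t i
      · -- counted
        have hu1 : u - 1 < t i := by have := hcase.2; omega
        have key := phi_det_row (K := K) (wtI u b) (rT i) (cT i) ⟨u - 1, hu1⟩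
          (fun j => by
            unfold wtI
            rw [if_pos ⟨by rw [hrval], by rw [hcval]; have := hcase.1; omega⟩])
          (fun k j hk => by
            unfold wtI
            rw [if_neg]
            rintro ⟨h1, -⟩
            rw [hrval] at h1
            exact hk (Fin.ext h1))
        have hdz : δ i ≠ 0 := det_X_ne_zero (rT i) (cT i) (hrval i) (hcinj i)
        have key' : phi K n (wtI u b) (δ i) = Polynomial.X * Polynomial.C (δ i) := key
        rw [key']
        constructor
        · exact mul_ne_zero Polynomial.X_ne_zero (fun h => hdz (by
            simpa using (Polynomial.C_eq_zero.mp h)))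
        · have hkk1 : kk i = 1 := by rw [hkk]; simp [hcase]
          rw [hkk1]
          apply Polynomial.natTrailingDegree_le_of_ne_zero
          have hc1 : (Polynomial.X * Polynomial.C (δ i)).coeff 1 = δ i := by
            rw [show (1:ℕ) = 0 + 1 from rfl, Polynomial.coeff_X_mul, Polynomial.coeff_C_zero]
          rw [hc1]
          exact hdz
      · -- uncounted
        have h0t : 0 < t i := ht i
        set σ : Equiv.Perm (Fin (t i)) :=
          if h : u - 1 < t i then Equiv.swap ⟨0, h0t⟩ ⟨u - 1, h⟩ else 1 with hσdef
        have hσ : ∀ k, wtI u b (rT i k, cT i (σ k)) = 0 := by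
          intro k
          by_cases hk : (k : ℕ) = u - 1
          · have hut : u ≤ t i := by have := k.isLt; omega
            have hab : a i < b := by
              rcases not_and_or.mp hcase with h | h
              · omega
              · exact absurd hut h
            have hu1 : u - 1 < t i := by omega
            have hkeq : k = (⟨u - 1, hu1⟩ : Fin (t i)) := Fin.ext hk
            have hσk : σ k = ⟨0, h0t⟩ := by
              rw [hσdef, dif_pos hu1, hkeq]
              exact Equiv.swap_apply_right _ _
            rw [hσk]
            unfold wtI
            rw [if_neg]
            rintro ⟨-, h2⟩
            have h3 : b - 1 ≤ a i - 1 := h2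
            have hai := ha i
            omega
          · unfold wtI
            rw [if_neg]
            rintro ⟨h1, -⟩
            rw [hrval] at h1
            exact hk h1
        have hne := constCoeff_phi_det (K := K) (wtI u b) (rT i) (cT i) (hrval i) (hcinj i) σ hσ
        have hkk0 : kk i = 0 := by rw [hkk]; simp [hcase]
        refine ⟨fun h => hne (by rw [hδ] at h; rw [h]; simp), ?_⟩
        rw [hkk0]
        apply Polynomial.natTrailingDegree_le_of_ne_zero
        exact hne
    have hlow : (∏ i : Fin w, neIdeal K n (t i) (a i)) ≤ (neIdeal K n u b) ^
        (Finset.univ.filter (fun i : Fin w => b ≤ a i ∧ u ≤ t i)).card :=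
      prod_le_pow _ _ _ _ (fun i _ hp => neIdeal_le hp.2 hp.1)
    have hbound : ∀ j ∈ {j : ℕ | (∏ i : Fin w, neIdeal K n (t i) (a i)) ≤
        neIdeal K n u b ^ j}, j ≤ (Finset.univ.filter
          (fun i : Fin w => b ≤ a i ∧ u ≤ t i)).card := by
      intro j hj
      have := upper_helper (wtI u b) (neIdeal K n u b) (neIdeal_le_comap u b hu)
        (fun i => neIdeal K n (t i) (a i)) δ hδmem kk
        (fun i => (hIfacts i).1) (fun i => (hIfacts i).2) hj
      rwa [hsumkk] at this
    exact le_antisymm (le_csSup ⟨_, hbound⟩ hlow) (csSup_le ⟨_, hlow⟩ hbound)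
  · -- monomial side
    set μ : ∀ i : Fin w, MvPolynomial (Fin n × Fin n) K :=
      fun i => ∏ k : Fin (t i), X (rT i k, cT i k) with hμ
    have hμmem : ∀ i, μ i ∈ neMonIdeal K n (t i) (a i) := fun i =>
      Ideal.subset_span ⟨rT i, cT i, hrval i, hcmono i, hccond i, rfl⟩
    have hμne : ∀ i, μ i ≠ 0 := fun i =>
      Finset.prod_ne_zero_iff.mpr fun k _ => MvPolynomial.X_ne_zero _
    have hJfacts : ∀ i, phi K n (wtJ u b) (μ i) ≠ 0 ∧
        (phi K n (wtJ u b) (μ i)).natTrailingDegree ≤ kk i := by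
      intro i
      have hkey : phi K n (wtJ u b) (μ i) =
          Polynomial.C (μ i) * Polynomial.X ^ (∑ k, wtJ u b (rT i k, cT i k)) := by
        rw [hμ]
        exact phi_prod (wtJ u b) (fun k => (rT i k, cT i k))
      have hKle : (∑ k, wtJ u b (rT i k, cT i k)) ≤ kk i := by
        by_cases hcase : b ≤ a i ∧ u ≤ t i
        · have hu1 : u - 1 < t i := by have := hcase.2; omega
          have hterm : ∀ k : Fin (t i), wtJ u b (rT i k, cT i k) ≤
              if k = (⟨u - 1, hu1⟩ : Fin (t i)) then 1 else 0 := by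
            intro k
            by_cases hk : k = (⟨u - 1, hu1⟩ : Fin (t i))
            · rw [if_pos hk]
              unfold wtJ
              split <;> omega
            · rw [if_neg hk]
              unfold wtJ
              rw [if_neg]
              rintro ⟨h1, -⟩
              rw [hrval] at h1
              exact hk (Fin.ext h1)
          calc (∑ k, wtJ u b (rT i k, cT i k)) ≤
              ∑ k : Fin (t i), if k = (⟨u - 1, hu1⟩ : Fin (t i)) then 1 else 0 :=
                Finset.sum_le_sum fun k _ => hterm k
            _ = 1 := by rw [Finset.sum_ite_eq' Finset.univ]; simp
            _ ≤ kk i := by rw [hkk]; simp [hcase]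
        · have : ∀ k : Fin (t i), wtJ u b (rT i k, cT i k) = 0 := by
            intro k
            unfold wtJ
            rw [if_neg]
            rintro ⟨h1, h2⟩
            have h1' : (k : ℕ) = u - 1 := h1
            have h2' : b - 1 + (u - 1) ≤ a i - 1 + (k : ℕ) := h2
            have hut : u ≤ t i := by have := k.isLt; omega
            have hab : a i < b := by
              rcases not_and_or.mp hcase with h | h
              · omega
              · exact absurd hut h
            have hai := ha i
            omega
          rw [Finset.sum_eq_zero fun k _ => this k]
          exact Nat.zero_le _
      constructor
      · rw [hkey]
        exact mul_ne_zero (fun h => hμne i (by simpa using (Polynomial.C_eq_zero.mp h)))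
          (pow_ne_zero _ Polynomial.X_ne_zero)
      · refine le_trans ?_ hKle
        apply Polynomial.natTrailingDegree_le_of_ne_zero
        rw [hkey, Polynomial.coeff_C_mul, Polynomial.coeff_X_pow, if_pos rfl, mul_one]
        exact hμne i
    have hlow : (∏ i : Fin w, neMonIdeal K n (t i) (a i)) ≤ (neMonIdeal K n u b) ^
        (Finset.univ.filter (fun i : Fin w => b ≤ a i ∧ u ≤ t i)).card :=
      prod_le_pow _ _ _ _ (fun i _ hp => neMonIdeal_le hp.2 hp.1)
    have hbound : ∀ j ∈ {j : ℕ | (∏ i : Fin w, neMonIdeal K n (t i) (a i)) ≤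
        neMonIdeal K n u b ^ j}, j ≤ (Finset.univ.filter
          (fun i : Fin w => b ≤ a i ∧ u ≤ t i)).card := by
      intro j hj
      have := upper_helper (wtJ u b) (neMonIdeal K n u b) (neMonIdeal_le_comap u b hu)
        (fun i => neMonIdeal K n (t i) (a i)) μ hμmem kk
        (fun i => (hJfacts i).1) (fun i => (hJfacts i).2) hj
      rwa [hsumkk] at this
    exact le_antisymm (le_csSup ⟨_, hbound⟩ hlow) (csSup_le ⟨_, hlow⟩ hbound)
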